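/- Let σ = (σ_0,…,σ_n) be a changemaker vector and let k = (p − |σ|₁)/2 (an integer since p ≡ |σ|₁ mod 2). Then 8·V^σ_k ≥ p − odd(σ). -/

import Mathlib

open Finset

/-- `σ` is a changemaker vector: all entries are positive and every integer `k` with
`0 ≤ k ≤ σ_0 + ⋯ + σ_n` is the sum of a subset of the entries. -/
def IsChangemaker {n : ℕ} (σ : Fin (n + 1) → ℕ) : Prop :=
  (∀ i, 0 < σ i) ∧
    ∀ k : ℕ, k ≤ ∑ i, σ i → ∃ A : Finset (Fin (n + 1)), ∑ i ∈ A, σ i = k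

/-- `Tcm σ m = T^σ_m`, the maximum of `σ·α` over all `α ∈ ℤ_{≥0}^{n+1}` with
`Σ_j α_j (α_j + 1) ≤ 2m` (the maximum exists: the set is nonempty and bounded). -/
noncomputable def Tcm {n : ℕ} (σ : Fin (n + 1) → ℕ) (m : ℕ) : ℕ :=
  sSup {t : ℕ | ∃ α : Fin (n + 1) → ℕ,
    (∑ j, α j * (α j + 1)) ≤ 2 * m ∧ t = ∑ j, σ j * α j}

/-- `Vcm σ i = V^σ_i`, the `i`-th relevant coefficient of `σ`:
the least `m` with `T^σ_m ≥ i` (and `V^σ_0 = 0`). -/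
noncomputable def Vcm {n : ℕ} (σ : Fin (n + 1) → ℕ) (i : ℕ) : ℕ :=
  sInf {m : ℕ | i ≤ Tcm σ m}

lemma tcm_bddAbove {n : ℕ} (σ : Fin (n + 1) → ℕ) (m : ℕ) :
    BddAbove {t : ℕ | ∃ α : Fin (n + 1) → ℕ,
      (∑ j, α j * (α j + 1)) ≤ 2 * m ∧ t = ∑ j, σ j * α j} := by
  refine ⟨(∑ j, σ j) * (2 * m), ?_⟩
  rintro t ⟨α, hα, rfl⟩
  rw [Finset.sum_mul]
  apply Finset.sum_le_sum
  intro j _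
  have h1 : α j ≤ 2 * m := by
    have h2 : α j * (α j + 1) ≤ 2 * m :=
      le_trans (Finset.single_le_sum (f := fun j => α j * (α j + 1))
        (fun _ _ => Nat.zero_le _) (Finset.mem_univ j)) hα
    calc α j ≤ α j * (α j + 1) := Nat.le_mul_of_pos_right _ (Nat.succ_pos _)
      _ ≤ 2 * m := h2
  exact Nat.mul_le_mul_left _ h1

lemma tcm_set_nonempty {n : ℕ} (σ : Fin (n + 1) → ℕ) (m : ℕ) :
    {t : ℕ | ∃ α : Fin (n + 1) → ℕ,
      (∑ j, α j * (α j + 1)) ≤ 2 * m ∧ t = ∑ j, σ j * α j}.Nonempty :=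
  ⟨0, fun _ => 0, by simp, by simp⟩

lemma aux_term (s a : ℕ) :
    2 * (s * (2 * a + 1)) + (if Odd s then 0 else 1) ≤ s ^ 2 + (2 * a + 1) ^ 2 := by
  by_cases h : Odd s
  · simp only [h, if_true, add_zero]
    zify
    nlinarith [sq_nonneg ((s : ℤ) - (2 * a + 1))]
  · simp only [h, if_false]
    obtain ⟨c, hc⟩ := Nat.not_odd_iff_even.mp h
    subst hc
    zify
    have hd : 0 ≤ ((c : ℤ) - a) * ((c : ℤ) - a - 1) := by
      rcases le_or_gt ((c : ℤ) - a) 0 with h1 | h1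
      · nlinarith
      · have : (1 : ℤ) ≤ (c : ℤ) - a := h1
        nlinarith
    nlinarith [hd]

theorem stmt_11 {n : ℕ} (σ : Fin (n + 1) → ℕ) (hσ : IsChangemaker σ)
    (k : ℕ) (hk : 2 * k + (∑ i, σ i) = ∑ i, (σ i) ^ 2) :
    (∑ i, (σ i) ^ 2) ≤
      8 * Vcm σ k + (Finset.univ.filter (fun i => Odd (σ i))).card := by
  have hsq : (∑ j, σ j * σ j) = ∑ i, (σ i) ^ 2 := by
    apply Finset.sum_congr rfl; intros; ring
  have hne : {m : ℕ | k ≤ Tcm σ m}.Nonempty := by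
    refine ⟨k + ∑ i, σ i, ?_⟩
    have hconstr : ∑ j, σ j * (σ j + 1) = (∑ j, (σ j) ^ 2) + ∑ j, σ j := by
      rw [← Finset.sum_add_distrib]
      apply Finset.sum_congr rfl; intros; ring
    have hmem : (∑ j, σ j * σ j) ∈ {t : ℕ | ∃ α : Fin (n + 1) → ℕ,
        (∑ j, α j * (α j + 1)) ≤ 2 * (k + ∑ i, σ i) ∧ t = ∑ j, σ j * α j} := by
      refine ⟨σ, ?_, rfl⟩
      omega
    have h1 : (∑ j, σ j * σ j) ≤ Tcm σ (k + ∑ i, σ i) :=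
      le_csSup (tcm_bddAbove σ _) hmem
    simp only [Set.mem_setOf_eq]
    omega
  have hVmem : k ≤ Tcm σ (Vcm σ k) := Nat.sInf_mem hne
  obtain ⟨α, hα1, hα2⟩ :=
    Nat.sSup_mem (tcm_set_nonempty σ (Vcm σ k)) (tcm_bddAbove σ (Vcm σ k))
  have hkX : k ≤ ∑ j, σ j * α j := by
    rw [show (∑ j, σ j * α j) = Tcm σ (Vcm σ k) from hα2.symm]; exact hVmem
  have hsum := Finset.sum_le_sum
    (fun j (_ : j ∈ (univ : Finset (Fin (n + 1)))) => aux_term (σ j) (α j))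
  have e1a : ∑ j, 2 * (σ j * (2 * α j + 1))
      = 4 * (∑ j, σ j * α j) + 2 * ∑ j, σ j := by
    have : ∀ j ∈ (univ : Finset (Fin (n + 1))),
        2 * (σ j * (2 * α j + 1)) = 4 * (σ j * α j) + 2 * σ j := fun j _ => by ring
    rw [Finset.sum_congr rfl this, Finset.sum_add_distrib, ← Finset.mul_sum, ← Finset.mul_sum]
  have e1b : ∑ j, (if Odd (σ j) then (0 : ℕ) else 1)
      = (univ.filter (fun j => ¬ Odd (σ j))).card := by
    rw [Finset.card_filter]
    apply Finset.sum_congr rfl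
    intro j _
    by_cases h : Odd (σ j) <;> simp [h]
  have e1 : ∑ j, (2 * (σ j * (2 * α j + 1)) + (if Odd (σ j) then 0 else 1))
      = (4 * (∑ j, σ j * α j) + 2 * ∑ j, σ j)
        + (univ.filter (fun j => ¬ Odd (σ j))).card := by
    rw [Finset.sum_add_distrib, e1a, e1b]
  have e3a : ∑ j, (2 * α j + 1) ^ 2 = 4 * (∑ j, α j * (α j + 1)) + (n + 1) := by
    have : ∀ j ∈ (univ : Finset (Fin (n + 1))),
        (2 * α j + 1) ^ 2 = 4 * (α j * (α j + 1)) + 1 := fun j _ => by ring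
    rw [Finset.sum_congr rfl this, Finset.sum_add_distrib, ← Finset.mul_sum,
      Finset.sum_const, card_univ, Fintype.card_fin, smul_eq_mul, mul_one]
  have e3 : ∑ j, ((σ j) ^ 2 + (2 * α j + 1) ^ 2)
      = (∑ j, (σ j) ^ 2) + (4 * (∑ j, α j * (α j + 1)) + (n + 1)) := by
    rw [Finset.sum_add_distrib, e3a]
  rw [e1, e3] at hsum
  clear hα2 hVmem hne hσ hsq e1 e1a e1b e3 e3a
  have e5 : (univ.filter (fun j => Odd (σ j))).card
      + (univ.filter (fun j => ¬ Odd (σ j))).card = n + 1 := by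
    rw [Finset.card_filter_add_card_filter_not, card_univ, Fintype.card_fin]
  omega
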